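/- If a, b, r > 0 satisfy ab = a·√(r² − a²/4) + b·√(r² − b²/4) (with r² ≥ a²/4 and r² ≥ b²/4), then a² + b² = 4r². -/
import Mathlib

theorem stmt_3 (a b r : ℝ) (ha : 0 < a) (hb : 0 < b) (hr : 0 < r)
    (ha' : a ^ 2 ≤ 4 * r ^ 2) (hb' : b ^ 2 ≤ 4 * r ^ 2)
    (h : a * b = a * Real.sqrt (r ^ 2 - a ^ 2 / 4) + b * Real.sqrt (r ^ 2 - b ^ 2 / 4)) :
    a ^ 2 + b ^ 2 = 4 * r ^ 2 := by
  set u := Real.sqrt (r ^ 2 - a ^ 2 / 4) with hu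
  set v := Real.sqrt (r ^ 2 - b ^ 2 / 4) with hv
  have hu2 : u ^ 2 = r ^ 2 - a ^ 2 / 4 := Real.sq_sqrt (by linarith)
  have hv2 : v ^ 2 = r ^ 2 - b ^ 2 / 4 := Real.sq_sqrt (by linarith)
  have hu0 : 0 ≤ u := Real.sqrt_nonneg _
  have hv0 : 0 ≤ v := Real.sqrt_nonneg _
  rcases lt_trichotomy (a ^ 2 + b ^ 2) (4 * r ^ 2) with hlt | heq | hgt
  · exfalso
    have h1 : b / 2 < u := by nlinarith [sq_nonneg (u + b/2)]
    have h2 : a / 2 < v := by nlinarith [sq_nonneg (v + a/2)]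
    nlinarith
  · exact heq
  · exfalso
    have h1 : u < b / 2 := by nlinarith [sq_nonneg (u + b/2)]
    have h2 : v < a / 2 := by nlinarith [sq_nonneg (v + a/2)]
    nlinarith
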